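/- Let α₁ < α₂ be nonnegative reals and let μ₁, μ₂ be Borel probability measures on ℝ^N whose supports are at Euclidean distance greater than some s > 0, and suppose for each i = 1, 2 there exist constants c_i, C_i > 0 and ε_i > 0 such that c_i·ε^{α_i} ≤ μ_i(B(x,ε)) ≤ C_i·ε^{α_i} for all x in the support of μ_i and all 0 < ε < ε_i. Then the mixture μ = (1/2)·μ₁ + (1/2)·μ₂ has correlation dimension D_C(μ) = lim_{ε→0⁺} log C(μ,ε)/log ε = α₁, the smaller of the two exponents (dimension blindness of correlation dimension). -/

import Mathlib

open MeasureTheory Filter Metric Topology ENNReal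

/-- The support of a measure on a metric space: points all of whose balls have positive mass. -/
def measSupport {X : Type*} [MetricSpace X] [MeasurableSpace X] (μ : Measure X) : Set X :=
  {x | ∀ ε : ℝ, 0 < ε → 0 < μ (Metric.ball x ε)}

/-- The correlation integral `C(μ,ε) = (μ ⊗ μ){(x,y) : ‖x - y‖ < ε}`. -/
noncomputable def corrIntegral {N : ℕ} (μ : Measure (EuclideanSpace ℝ (Fin N))) (ε : ℝ) :
    ℝ≥0∞ :=
  (μ.prod μ) {q : EuclideanSpace ℝ (Fin N) × EuclideanSpace ℝ (Fin N) | dist q.1 q.2 < ε}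

/-- The complement of the support of a measure on a second countable metric space is null. -/
lemma measSupport_compl_null {X : Type*} [MetricSpace X] [MeasurableSpace X]
    [SecondCountableTopology X] (μ : Measure X) :
    μ (measSupport μ)ᶜ = 0 := by
  have h : ∀ x : ((measSupport μ)ᶜ : Set X), ∃ r : ℝ, 0 < r ∧ μ (ball (x:X) r) = 0 := by
    rintro ⟨x, hx⟩
    simp only [measSupport, Set.mem_compl_iff, Set.mem_setOf_eq, not_forall] at hx
    obtain ⟨r, hr, hr0⟩ := hx
    exact ⟨r, hr, by simpa using le_of_not_gt hr0⟩
  choose r hr hr0 using h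
  have hcov : (measSupport μ)ᶜ ⊆ ⋃ x : ((measSupport μ)ᶜ : Set X), ball (x:X) (r x) :=
    fun x hx => Set.mem_iUnion.2 ⟨⟨x, hx⟩, mem_ball_self (hr ⟨x, hx⟩)⟩
  obtain ⟨T, hT, hTeq⟩ := TopologicalSpace.isOpen_iUnion_countable
      (fun x : ((measSupport μ)ᶜ : Set X) => ball (x:X) (r x)) (fun x => isOpen_ball)
  refine measure_mono_null (hcov.trans hTeq.symm.subset) ?_
  exact (measure_biUnion_null_iff hT).2 fun i _ => hr0 i

/-- Squeeze lemma for log-log limits. -/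
lemma loglog_squeeze (α₁ a b : ℝ) (ha : 0 < a) (hb : 0 < b) (δ : ℝ) (hδ : 0 < δ) (hδ1 : δ ≤ 1)
    (T : ℝ → ℝ)
    (hT : ∀ ε ∈ Set.Ioo (0:ℝ) δ, a * ε ^ α₁ ≤ T ε ∧ T ε ≤ b * ε ^ α₁) :
    Tendsto (fun ε : ℝ => Real.log (T ε) / Real.log ε) (𝓝[>] 0) (𝓝 α₁) := by
  have hlog : Tendsto (fun ε : ℝ => (Real.log ε)⁻¹) (𝓝[>] 0) (𝓝 0) := by
    have h1 : Tendsto (fun ε : ℝ => (-Real.log ε)⁻¹) (𝓝[>] 0) (𝓝 0) :=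
      (tendsto_neg_atBot_atTop.comp Real.tendsto_log_nhdsGT_zero).inv_tendsto_atTop
    have := h1.neg
    simpa [inv_neg] using this
  have hg : Tendsto (fun ε : ℝ => α₁ + Real.log b * (Real.log ε)⁻¹) (𝓝[>] 0) (𝓝 α₁) := by
    simpa using tendsto_const_nhds.add ((hlog.const_mul (Real.log b)))
  have hh : Tendsto (fun ε : ℝ => α₁ + Real.log a * (Real.log ε)⁻¹) (𝓝[>] 0) (𝓝 α₁) := by
    simpa using tendsto_const_nhds.add ((hlog.const_mul (Real.log a)))
  have hev : ∀ᶠ ε in 𝓝[>] (0:ℝ), ε ∈ Set.Ioo (0:ℝ) δ := by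
    filter_upwards [Ioo_mem_nhdsGT_of_mem (by simp [hδ] : (0:ℝ) ∈ Set.Ico 0 δ)] with ε hε
    exact hε
  refine tendsto_of_tendsto_of_tendsto_of_le_of_le' hg hh ?_ ?_
  · filter_upwards [hev] with ε hε
    have hε0 := hε.1
    have hε1 : ε < 1 := lt_of_lt_of_le hε.2 hδ1
    have hlogneg : Real.log ε < 0 := Real.log_neg hε0 hε1
    have hTpos : 0 < T ε := lt_of_lt_of_le (by positivity) (hT ε hε).1
    have h1 : Real.log (T ε) ≤ Real.log (b * ε ^ α₁) := Real.log_le_log hTpos (hT ε hε).2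
    have h2 : Real.log (b * ε ^ α₁) = Real.log b + α₁ * Real.log ε := by
      rw [Real.log_mul (ne_of_gt hb) (by positivity), Real.log_rpow hε0]
    have := mul_le_mul_of_nonpos_right h1 (le_of_lt (inv_neg''.2 hlogneg))
    calc α₁ + Real.log b * (Real.log ε)⁻¹
        = Real.log (b * ε ^ α₁) * (Real.log ε)⁻¹ := by
          rw [h2, add_mul, mul_assoc, mul_inv_cancel₀ (ne_of_lt hlogneg), mul_one, add_comm]
      _ ≤ Real.log (T ε) * (Real.log ε)⁻¹ := this
      _ = Real.log (T ε) / Real.log ε := (div_eq_mul_inv _ _).symm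
  · filter_upwards [hev] with ε hε
    have hε0 := hε.1
    have hε1 : ε < 1 := lt_of_lt_of_le hε.2 hδ1
    have hlogneg : Real.log ε < 0 := Real.log_neg hε0 hε1
    have hb' : (0:ℝ) < a * ε ^ α₁ := by positivity
    have h1 : Real.log (a * ε ^ α₁) ≤ Real.log (T ε) :=
      Real.log_le_log hb' (hT ε hε).1
    have h2 : Real.log (a * ε ^ α₁) = Real.log a + α₁ * Real.log ε := by
      rw [Real.log_mul (ne_of_gt ha) (by positivity), Real.log_rpow hε0]
    have := mul_le_mul_of_nonpos_right h1 (le_of_lt (inv_neg''.2 hlogneg))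
    calc Real.log (T ε) / Real.log ε = Real.log (T ε) * (Real.log ε)⁻¹ := div_eq_mul_inv _ _
      _ ≤ Real.log (a * ε ^ α₁) * (Real.log ε)⁻¹ := this
      _ = α₁ + Real.log a * (Real.log ε)⁻¹ := by
          rw [h2, add_mul, mul_assoc, mul_inv_cancel₀ (ne_of_lt hlogneg), mul_one, add_comm]

/-- Dimension blindness of correlation dimension: a mixture `μ = (1/2)μ₁ + (1/2)μ₂` of measures
with separated supports and uniform scaling exponents `α₁ < α₂` has correlation dimension `α₁`,
the smaller of the two exponents. -/
theorem correlationDim_mixture_eq_min {N : ℕ} (α₁ α₂ : ℝ) (hα₁ : 0 ≤ α₁) (hα : α₁ < α₂)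
    (μ₁ μ₂ : Measure (EuclideanSpace ℝ (Fin N)))
    [IsProbabilityMeasure μ₁] [IsProbabilityMeasure μ₂]
    (s : ℝ) (hs : 0 < s)
    (hsep : ∀ x ∈ measSupport μ₁, ∀ y ∈ measSupport μ₂, s < dist x y)
    (c₁ C₁ ε₁ : ℝ) (hc₁ : 0 < c₁) (hC₁ : 0 < C₁) (hε₁ : 0 < ε₁)
    (hball₁ : ∀ x ∈ measSupport μ₁, ∀ ε : ℝ, 0 < ε → ε < ε₁ →
      ENNReal.ofReal (c₁ * ε ^ α₁) ≤ μ₁ (Metric.ball x ε) ∧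
      μ₁ (Metric.ball x ε) ≤ ENNReal.ofReal (C₁ * ε ^ α₁))
    (c₂ C₂ ε₂ : ℝ) (hc₂ : 0 < c₂) (hC₂ : 0 < C₂) (hε₂ : 0 < ε₂)
    (hball₂ : ∀ x ∈ measSupport μ₂, ∀ ε : ℝ, 0 < ε → ε < ε₂ →
      ENNReal.ofReal (c₂ * ε ^ α₂) ≤ μ₂ (Metric.ball x ε) ∧
      μ₂ (Metric.ball x ε) ≤ ENNReal.ofReal (C₂ * ε ^ α₂)) :
    Tendsto (fun ε : ℝ =>
        Real.log (corrIntegral ((1/2 : ℝ≥0∞) • μ₁ + (1/2 : ℝ≥0∞) • μ₂) ε).toReal / Real.log ε)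
      (𝓝[>] 0) (𝓝 α₁) := by
  set μ : Measure (EuclideanSpace ℝ (Fin N)) := (1/2 : ℝ≥0∞) • μ₁ + (1/2 : ℝ≥0∞) • μ₂ with hμdef
  set δ : ℝ := min (min 1 s) (min ε₁ ε₂) with hδdef
  have hδ : 0 < δ := by
    simp only [hδdef, lt_min_iff]
    exact ⟨⟨one_pos, hs⟩, hε₁, hε₂⟩
  have hδ1 : δ ≤ 1 := le_trans (min_le_left _ _) (min_le_left _ _)
  -- a.e. membership in supports
  have hae₁ : ∀ᵐ x ∂μ₁, x ∈ measSupport μ₁ := by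
    rw [ae_iff]
    exact measSupport_compl_null μ₁
  have hae₂ : ∀ᵐ x ∂μ₂, x ∈ measSupport μ₂ := by
    rw [ae_iff]
    exact measSupport_compl_null μ₂
  -- main two-sided bound on the correlation integral
  have hbound : ∀ ε ∈ Set.Ioo (0:ℝ) δ,
      ENNReal.ofReal (c₁/4 * ε ^ α₁) ≤ corrIntegral μ ε ∧
      corrIntegral μ ε ≤ ENNReal.ofReal ((C₁ + C₂)/4 * ε ^ α₁) := by
    intro ε hε
    obtain ⟨hε0, hεδ⟩ := hε
    have hεs : ε ≤ s := le_of_lt (lt_of_lt_of_le hεδ (le_trans (min_le_left _ _) (min_le_right _ _)))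
    have hε1' : ε ≤ 1 := le_of_lt (lt_of_lt_of_le hεδ hδ1)
    have hεε₁ : ε < ε₁ := lt_of_lt_of_le hεδ (le_trans (min_le_right _ _) (min_le_left _ _))
    have hεε₂ : ε < ε₂ := lt_of_lt_of_le hεδ (le_trans (min_le_right _ _) (min_le_right _ _))
    -- correlation integral as an integral of ball masses
    have hcorr : corrIntegral μ ε
        = (1/2 : ℝ≥0∞) * ∫⁻ x, μ (ball x ε) ∂μ₁
          + (1/2 : ℝ≥0∞) * ∫⁻ x, μ (ball x ε) ∂μ₂ := by
      have hmeas : MeasurableSet {q : EuclideanSpace ℝ (Fin N) × EuclideanSpace ℝ (Fin N) |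
          dist q.1 q.2 < ε} :=
        (isOpen_lt (continuous_dist.comp (continuous_fst.prodMk continuous_snd))
          continuous_const).measurableSet
      have : IsFiniteMeasure μ := ⟨by rw [hμdef]; simp [Measure.add_apply, smul_eq_mul, ENNReal.add_lt_top]⟩
      rw [corrIntegral, Measure.prod_apply hmeas]
      have hpre : ∀ x : EuclideanSpace ℝ (Fin N),
          (Prod.mk x ⁻¹' {q : EuclideanSpace ℝ (Fin N) × EuclideanSpace ℝ (Fin N) |
              dist q.1 q.2 < ε}) = ball x ε := by
        intro x; ext y; simp [Metric.mem_ball, dist_comm]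
      simp only [hpre]
      rw [hμdef, lintegral_add_measure, lintegral_smul_measure, lintegral_smul_measure]
      simp only [smul_eq_mul]
    -- values of μ on balls about points of each support
    have hval₁ : ∀ x ∈ measSupport μ₁, μ (ball x ε) = (1/2 : ℝ≥0∞) * μ₁ (ball x ε) := by
      intro x hx
      have h2 : μ₂ (ball x ε) = 0 := by
        have hsub : ball x ε ⊆ (measSupport μ₂)ᶜ := by
          intro y hy hy'
          have := hsep x hx y hy'
          rw [mem_ball, dist_comm] at hy
          linarith
        exact measure_mono_null hsub (measSupport_compl_null μ₂)
      simp [hμdef, Measure.add_apply, Measure.smul_apply, h2, smul_eq_mul]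
    have hval₂ : ∀ x ∈ measSupport μ₂, μ (ball x ε) = (1/2 : ℝ≥0∞) * μ₂ (ball x ε) := by
      intro x hx
      have h1 : μ₁ (ball x ε) = 0 := by
        have hsub : ball x ε ⊆ (measSupport μ₁)ᶜ := by
          intro y hy hy'
          have := hsep y hy' x hx
          rw [mem_ball] at hy
          linarith
        exact measure_mono_null hsub (measSupport_compl_null μ₁)
      simp [hμdef, Measure.add_apply, Measure.smul_apply, h1, smul_eq_mul]
    -- bounds on the two integrals
    have hI₁up : ∫⁻ x, μ (ball x ε) ∂μ₁ ≤ (1/2 : ℝ≥0∞) * ENNReal.ofReal (C₁ * ε ^ α₁) := by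
      calc ∫⁻ x, μ (ball x ε) ∂μ₁
          ≤ ∫⁻ _, (1/2 : ℝ≥0∞) * ENNReal.ofReal (C₁ * ε ^ α₁) ∂μ₁ := by
            refine lintegral_mono_ae (hae₁.mono fun x hx => ?_)
            rw [hval₁ x hx]
            exact mul_le_mul_right (hball₁ x hx ε hε0 hεε₁).2 _
        _ = (1/2 : ℝ≥0∞) * ENNReal.ofReal (C₁ * ε ^ α₁) := by simp
    have hI₁lo : (1/2 : ℝ≥0∞) * ENNReal.ofReal (c₁ * ε ^ α₁) ≤ ∫⁻ x, μ (ball x ε) ∂μ₁ := by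
      calc (1/2 : ℝ≥0∞) * ENNReal.ofReal (c₁ * ε ^ α₁)
          = ∫⁻ _, (1/2 : ℝ≥0∞) * ENNReal.ofReal (c₁ * ε ^ α₁) ∂μ₁ := by simp
        _ ≤ ∫⁻ x, μ (ball x ε) ∂μ₁ := by
            refine lintegral_mono_ae (hae₁.mono fun x hx => ?_)
            rw [hval₁ x hx]
            exact mul_le_mul_right (hball₁ x hx ε hε0 hεε₁).1 _
    have hI₂up : ∫⁻ x, μ (ball x ε) ∂μ₂ ≤ (1/2 : ℝ≥0∞) * ENNReal.ofReal (C₂ * ε ^ α₂) := by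
      calc ∫⁻ x, μ (ball x ε) ∂μ₂
          ≤ ∫⁻ _, (1/2 : ℝ≥0∞) * ENNReal.ofReal (C₂ * ε ^ α₂) ∂μ₂ := by
            refine lintegral_mono_ae (hae₂.mono fun x hx => ?_)
            rw [hval₂ x hx]
            exact mul_le_mul_right (hball₂ x hx ε hε0 hεε₂).2 _
        _ = (1/2 : ℝ≥0∞) * ENNReal.ofReal (C₂ * ε ^ α₂) := by simp
    have half4 : (1/2 : ℝ≥0∞) * (1/2 : ℝ≥0∞) = ENNReal.ofReal (1/4) := by
      rw [show ((1:ℝ)/4) = (1/2) * (1/2) by norm_num, ENNReal.ofReal_mul (by norm_num)]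
      norm_num [ENNReal.ofReal_div_of_pos]
    constructor
    · -- lower bound
      have : ENNReal.ofReal (c₁/4 * ε ^ α₁)
          = (1/2 : ℝ≥0∞) * ((1/2 : ℝ≥0∞) * ENNReal.ofReal (c₁ * ε ^ α₁)) := by
        rw [← mul_assoc, half4, ← ENNReal.ofReal_mul (by norm_num)]
        ring_nf
      rw [this, hcorr]
      exact le_add_right (mul_le_mul_right hI₁lo _)
    · -- upper bound
      rw [hcorr]
      have hup : (1/2 : ℝ≥0∞) * ∫⁻ x, μ (ball x ε) ∂μ₁
            + (1/2 : ℝ≥0∞) * ∫⁻ x, μ (ball x ε) ∂μ₂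
          ≤ ENNReal.ofReal (C₁/4 * ε ^ α₁) + ENNReal.ofReal (C₂/4 * ε ^ α₂) := by
        have e₁ : ENNReal.ofReal (C₁/4 * ε ^ α₁)
            = (1/2 : ℝ≥0∞) * ((1/2 : ℝ≥0∞) * ENNReal.ofReal (C₁ * ε ^ α₁)) := by
          rw [← mul_assoc, half4, ← ENNReal.ofReal_mul (by norm_num)]
          ring_nf
        have e₂ : ENNReal.ofReal (C₂/4 * ε ^ α₂)
            = (1/2 : ℝ≥0∞) * ((1/2 : ℝ≥0∞) * ENNReal.ofReal (C₂ * ε ^ α₂)) := by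
          rw [← mul_assoc, half4, ← ENNReal.ofReal_mul (by norm_num)]
          ring_nf
        rw [e₁, e₂]
        exact add_le_add (mul_le_mul_right hI₁up _) (mul_le_mul_right hI₂up _)
      refine hup.trans ?_
      rw [← ENNReal.ofReal_add (by positivity) (by positivity)]
      refine ENNReal.ofReal_le_ofReal ?_
      have hεpow : ε ^ α₂ ≤ ε ^ α₁ :=
        Real.rpow_le_rpow_of_exponent_ge hε0 hε1' (le_of_lt hα)
      have : C₂/4 * ε ^ α₂ ≤ C₂/4 * ε ^ α₁ :=
        mul_le_mul_of_nonneg_left hεpow (by positivity)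
      nlinarith [Real.rpow_nonneg (le_of_lt hε0) α₁]
  -- convert to real bounds and apply the squeeze lemma
  refine loglog_squeeze α₁ (c₁/4) ((C₁+C₂)/4) (by positivity) (by positivity) δ hδ hδ1 _ ?_
  intro ε hε
  obtain ⟨hlo, hup⟩ := hbound ε hε
  have hne : corrIntegral μ ε ≠ ⊤ :=
    ne_top_of_le_ne_top ENNReal.ofReal_ne_top hup
  constructor
  · exact (ENNReal.ofReal_le_iff_le_toReal hne).1 hlo
  · exact ENNReal.toReal_le_of_le_ofReal (by have := hε.1; positivity) hup
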